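/- Fix real numbers r and ϑ with √((√5 − 1)/2) < r < 1 and 0 < ϑ < 1, and define f(d) = √ϑ/(1 − r²)^{d/4} and g(d) = (r/√(1 − r²))^d · (√(1 + 2ϑ(1 − r²)^{d/2}/r^{2d}) − 1) for positive integers d. Then f(d)/g(d) is asymptotically equivalent to (1/√ϑ)·(r²/√(1 − r²))^{d/2} as d → ∞, and consequently f(d)/g(d) → ∞ as d → ∞. -/

import Mathlib

open Filter

private lemma rpow_div_nat (x : ℝ) (hx : 0 ≤ x) (d : ℕ) (k : ℝ) :
    x ^ ((d : ℝ) / k) = (x ^ ((1 : ℝ) / k)) ^ d := by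
  rw [← Real.rpow_natCast (x ^ ((1 : ℝ) / k)) d, ← Real.rpow_mul hx]
  congr 1
  ring

/-- **Corollary, case 1.** For fixed `√((√5-1)/2) < r < 1` and `0 < ϑ < 1`, with
`f(d) = √ϑ/(1-r²)^{d/4}` (Gorban–Burton–Tyukin) and
`g(d) = (r/√(1-r²))^d (√(1 + 2ϑ(1-r²)^{d/2}/r^{2d}) - 1)` (Gorban–Tyukin), the
quotient `f(d)/g(d)` is asymptotically `(1/√ϑ)·(r²/√(1-r²))^{d/2}`, and
consequently `f(d)/g(d) → ∞` as `d → ∞`. -/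
theorem bounds_quotient_asymp_large_r
    (r ϑ : ℝ) (hr0 : Real.sqrt ((Real.sqrt 5 - 1) / 2) < r) (hr1 : r < 1)
    (hϑ0 : 0 < ϑ) (hϑ1 : ϑ < 1) :
    Tendsto (fun d : ℕ =>
        (Real.sqrt ϑ / (1 - r ^ 2) ^ ((d : ℝ) / 4) /
            ((r / Real.sqrt (1 - r ^ 2)) ^ d *
              (Real.sqrt (1 + 2 * ϑ * (1 - r ^ 2) ^ ((d : ℝ) / 2) / r ^ (2 * d)) - 1))) /
          (1 / Real.sqrt ϑ * (r ^ 2 / Real.sqrt (1 - r ^ 2)) ^ ((d : ℝ) / 2)))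
      atTop (nhds 1) ∧
    Tendsto (fun d : ℕ =>
        Real.sqrt ϑ / (1 - r ^ 2) ^ ((d : ℝ) / 4) /
          ((r / Real.sqrt (1 - r ^ 2)) ^ d *
            (Real.sqrt (1 + 2 * ϑ * (1 - r ^ 2) ^ ((d : ℝ) / 2) / r ^ (2 * d)) - 1)))
      atTop atTop := by
  have h5 : Real.sqrt 5 ^ 2 = 5 := Real.sq_sqrt (by norm_num)
  have h5' : (1:ℝ) ≤ Real.sqrt 5 := by nlinarith [Real.sqrt_nonneg 5]
  have hA : (0:ℝ) ≤ (Real.sqrt 5 - 1) / 2 := by linarith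
  have hr : 0 < r := lt_of_le_of_lt (Real.sqrt_nonneg _) hr0
  have hr2 : (Real.sqrt 5 - 1) / 2 < r ^ 2 := by
    nlinarith [Real.sq_sqrt hA, Real.sqrt_nonneg ((Real.sqrt 5 - 1) / 2)]
  have hs : (0:ℝ) < 1 - r ^ 2 := by nlinarith
  set s : ℝ := 1 - r ^ 2 with hsdef
  have hkey : s < (r ^ 2) ^ 2 := by nlinarith
  have hc : 0 < Real.sqrt s := Real.sqrt_pos.mpr hs
  have hc2 : Real.sqrt s ^ 2 = s := Real.sq_sqrt hs.le
  have hckey : Real.sqrt s < r ^ 2 := by nlinarith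
  set c : ℝ := Real.sqrt s with hcdef
  set b : ℝ := s ^ ((1:ℝ)/4) with hbdef
  have hb : 0 < b := Real.rpow_pos_of_pos hs _
  have hb2 : b ^ 2 = c := by
    rw [hbdef, ← Real.rpow_natCast (s ^ ((1:ℝ)/4)) 2, ← Real.rpow_mul hs.le,
      hcdef, Real.sqrt_eq_rpow]
    norm_num
  set t : ℝ := r / b with htdef
  have ht : 0 < t := div_pos hr hb
  have ht2 : t ^ 2 = r ^ 2 / c := by
    rw [htdef, div_pow, hb2]
  have ht1 : 1 < t := by
    have h1 : 1 < t ^ 2 := by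
      rw [ht2, lt_div_iff₀ hc]
      linarith
    nlinarith [ht]
  have hϑs : 0 < Real.sqrt ϑ := Real.sqrt_pos.mpr hϑ0
  have hϑ2 : Real.sqrt ϑ ^ 2 = ϑ := Real.sq_sqrt hϑ0.le
  -- rpow conversions
  have h4 : ∀ d : ℕ, s ^ ((d:ℝ)/4) = b ^ d := fun d => rpow_div_nat s hs.le d 4
  have h2 : ∀ d : ℕ, s ^ ((d:ℝ)/2) = c ^ d := by
    intro d
    rw [rpow_div_nat s hs.le d 2, hcdef, Real.sqrt_eq_rpow]
  have hT : ∀ d : ℕ, (r ^ 2 / c) ^ ((d:ℝ)/2) = t ^ d := by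
    intro d
    have h0 : (0:ℝ) ≤ r ^ 2 / c := by positivity
    rw [rpow_div_nat _ h0 d 2]
    congr 1
    rw [← ht2, ← Real.rpow_natCast t 2, ← Real.rpow_mul ht.le]
    norm_num
  -- the epsilon sequence
  set ε : ℕ → ℝ := fun d => 2 * ϑ * s ^ ((d:ℝ)/2) / r ^ (2 * d) with hεdef
  have hεpos : ∀ d, 0 < ε d := by
    intro d
    have : (0:ℝ) < s ^ ((d:ℝ)/2) := Real.rpow_pos_of_pos hs _
    positivity
  have hεeq : ∀ d, ε d = 2 * ϑ * (c / r ^ 2) ^ d := by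
    intro d
    rw [hεdef]
    simp only
    rw [h2 d, div_pow, pow_mul]
    ring
  set u : ℕ → ℝ := fun d => Real.sqrt (1 + ε d) with hudef
  have hu1 : ∀ d, 1 < u d := by
    intro d
    have h1 : (1:ℝ) < 1 + ε d := by linarith [hεpos d]
    have := Real.lt_sqrt (x := 1) (y := 1 + ε d) (by norm_num)
    rw [hudef]
    simpa using this.mpr (by linarith)
  have hu2 : ∀ d, u d ^ 2 = 1 + ε d := by
    intro d
    exact Real.sq_sqrt (by linarith [hεpos d])
  -- the main pointwise identity
  have hmain : ∀ d : ℕ,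
      Real.sqrt ϑ / (1 - r ^ 2) ^ ((d : ℝ) / 4) /
          ((r / Real.sqrt (1 - r ^ 2)) ^ d *
            (Real.sqrt (1 + 2 * ϑ * (1 - r ^ 2) ^ ((d : ℝ) / 2) / r ^ (2 * d)) - 1))
        = (u d + 1) / 2 * (1 / Real.sqrt ϑ * t ^ d) := by
    intro d
    have hXpos : 0 < b ^ d := pow_pos hb d
    have hRpos : 0 < r ^ d := pow_pos hr d
    have hu1d := hu1 d
    have hu2d := hu2 d
    have hcX : c ^ d = (b ^ d) ^ 2 := by
      rw [← hb2, ← pow_mul, ← pow_mul, Nat.mul_comm]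
    have hεX : ε d * (r ^ d) ^ 2 = 2 * ϑ * c ^ d := by
      rw [hεdef]
      simp only
      rw [h2 d, mul_comm 2 d, pow_mul]
      field_simp
    have huu : Real.sqrt (1 + 2 * ϑ * s ^ ((d:ℝ)/2) / r ^ (2*d)) = u d := by
      simp only [hudef, hεdef]
    rw [huu, h4 d, div_pow, htdef, div_pow]
    have hu1' : u d - 1 ≠ 0 := by linarith
    have hcd : (0:ℝ) < c ^ d := pow_pos hc d
    set X := b ^ d with hXdef
    set R := r ^ d with hRdef
    set C := c ^ d with hCdef
    set v := u d with hvdef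
    set e := ε d with hedef
    clear_value X R C v e
    field_simp
    linear_combination 2*C*hϑ2 - R^2*hu2d - hεX
  -- the target normalization equals (1/√ϑ) t^d
  have hTall : ∀ d : ℕ, (1 / Real.sqrt ϑ * (r ^ 2 / Real.sqrt (1 - r ^ 2)) ^ ((d : ℝ) / 2))
      = 1 / Real.sqrt ϑ * t ^ d := by
    intro d
    rw [← hsdef, ← hcdef, hT d]
  have hTpos : ∀ d : ℕ, 0 < 1 / Real.sqrt ϑ * t ^ d := by
    intro d
    positivity
  -- limit of ε
  have hεlim : Tendsto ε atTop (nhds 0) := by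
    have hlt : c / r ^ 2 < 1 := by
      rw [div_lt_one (by positivity)]
      exact hckey
    have h0 : (0:ℝ) ≤ c / r ^ 2 := by positivity
    have := tendsto_pow_atTop_nhds_zero_of_lt_one h0 hlt
    have h2' := this.const_mul (2 * ϑ)
    simp only [mul_zero] at h2'
    have hfe : ε = fun d => 2 * ϑ * (c / r ^ 2) ^ d := funext hεeq
    rw [hfe]
    exact h2'
  -- limit of Q
  have hQlim : Tendsto (fun d => (u d + 1) / 2) atTop (nhds 1) := by
    have h1 : Tendsto (fun d => 1 + ε d) atTop (nhds 1) := by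
      have := hεlim.const_add 1
      simpa using this
    have h2' : Tendsto u atTop (nhds 1) := by
      have := h1.sqrt
      simpa using this
    have h3 : Tendsto (fun d => (u d + 1) / 2) atTop (nhds ((1 + 1) / 2)) :=
      (h2'.add_const 1).div_const 2
    norm_num at h3
    exact h3
  constructor
  · have heq : ∀ d : ℕ,
        (Real.sqrt ϑ / (1 - r ^ 2) ^ ((d : ℝ) / 4) /
            ((r / Real.sqrt (1 - r ^ 2)) ^ d *
              (Real.sqrt (1 + 2 * ϑ * (1 - r ^ 2) ^ ((d : ℝ) / 2) / r ^ (2 * d)) - 1))) /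
          (1 / Real.sqrt ϑ * (r ^ 2 / Real.sqrt (1 - r ^ 2)) ^ ((d : ℝ) / 2))
        = (u d + 1) / 2 := by
      intro d
      rw [hmain d, hTall d, mul_div_assoc, div_self (hTpos d).ne', mul_one]
    refine (tendsto_congr heq).mpr ?_
    exact hQlim
  · have hTlim : Tendsto (fun d : ℕ => 1 / Real.sqrt ϑ * t ^ d) atTop atTop := by
      exact (tendsto_pow_atTop_atTop_of_one_lt ht1).const_mul_atTop (by positivity)
    refine (tendsto_congr hmain).mpr ?_
    exact hQlim.pos_mul_atTop one_pos hTlim
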